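/- If D is an integral domain and I is a nonzero fractional ideal of D, then the inverse of the extended ideal ID[[X]] in the power series ring equals I^{-1}[[X]], which also equals the inverse of I[[X]]. -/

import Mathlib

open scoped nonZeroDivisors

variable (D : Type*) [CommRing D] [IsDomain D]
variable (K : Type*) [Field K] [Algebra D K] [IsFractionRing D K]

/-- `D[[X]]` acts on the field `K((X))` of Laurent series over the quotient field `K`,
via mapping coefficients into `K`.  The quotient field of `D[[X]]` embeds in `K((X))`. -/
noncomputable instance : Algebra (PowerSeries D) (LaurentSeries K) :=
  RingHom.toAlgebra
    (((HahnSeries.ofPowerSeries ℤ K) : PowerSeries K →+* LaurentSeries K).comp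
      (PowerSeries.map (algebraMap D K)))

/-- The ideal `I D[[X]]` of `D[[X]]` generated by a fractional ideal `I ⊆ K`,
viewed inside `K((X))`. -/
noncomputable def extPS (I : FractionalIdeal D⁰ K) : Submodule (PowerSeries D) (LaurentSeries K) :=
  Submodule.span (PowerSeries D)
    ((HahnSeries.C : K →+* LaurentSeries K) '' ((I : Submodule D K) : Set K))

/-- The set of power series with all coefficients in a given `D`-submodule `M ⊆ K`,
viewed inside `K((X))`. -/
def psWithCoeff (M : Submodule D K) : Set (LaurentSeries K) :=
  {y | ∃ g : PowerSeries K, (∀ n : ℕ, PowerSeries.coeff n g ∈ M) ∧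
    y = HahnSeries.ofPowerSeries ℤ K g}

lemma aux_algebraMap_eq (f : PowerSeries D) :
    algebraMap (PowerSeries D) (LaurentSeries K) f =
      HahnSeries.ofPowerSeries ℤ K (PowerSeries.map (algebraMap D K) f) := rfl

/-- Characterization of membership in `1 : Submodule (PowerSeries D) (LaurentSeries K)`. -/
lemma aux_mem_one_iff (x : LaurentSeries K) :
    x ∈ (1 : Submodule (PowerSeries D) (LaurentSeries K)) ↔
      ∃ g : PowerSeries K,
        (∀ n : ℕ, PowerSeries.coeff n g ∈ (1 : FractionalIdeal D⁰ K)) ∧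
        x = HahnSeries.ofPowerSeries ℤ K g := by
  rw [Submodule.mem_one]
  constructor
  · rintro ⟨f, rfl⟩
    refine ⟨PowerSeries.map (algebraMap D K) f, fun n => ?_, rfl⟩
    rw [PowerSeries.coeff_map]
    exact (FractionalIdeal.mem_one_iff D⁰).mpr ⟨_, rfl⟩
  · rintro ⟨g, hg, rfl⟩
    choose f hf using fun n => (FractionalIdeal.mem_one_iff D⁰).mp (hg n)
    refine ⟨PowerSeries.mk f, ?_⟩
    rw [aux_algebraMap_eq]
    congr 1
    ext n
    simp [PowerSeries.coeff_map, hf n]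

/-- Product of a series with coefficients in `I⁻¹` and one with coefficients in `I`. -/
lemma aux_mul_mem (I : FractionalIdeal D⁰ K) (hI : I ≠ 0) (g h : PowerSeries K)
    (hg : ∀ n : ℕ, PowerSeries.coeff n g ∈ (I⁻¹ : FractionalIdeal D⁰ K))
    (hh : ∀ n : ℕ, PowerSeries.coeff n h ∈ I) :
    HahnSeries.ofPowerSeries ℤ K g * HahnSeries.ofPowerSeries ℤ K h ∈
      (1 : Submodule (PowerSeries D) (LaurentSeries K)) := by
  rw [← map_mul, aux_mem_one_iff]
  refine ⟨g * h, fun n => ?_, rfl⟩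
  rw [PowerSeries.coeff_mul]
  apply Submodule.sum_mem
  intro p _
  exact (FractionalIdeal.mem_inv_iff hI).mp (hg p.1) _ (hh p.2)

/-- If `x * z ∈ 1` for all `z` in a set `S`, then for all `z` in its span. -/
lemma aux_span (x : LaurentSeries K) (S : Set (LaurentSeries K))
    (hx : ∀ z ∈ S, x * z ∈ (1 : Submodule (PowerSeries D) (LaurentSeries K))) :
    ∀ z ∈ Submodule.span (PowerSeries D) S,
      x * z ∈ (1 : Submodule (PowerSeries D) (LaurentSeries K)) := by
  intro z hz
  induction hz using Submodule.span_induction with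
  | mem z hzS => exact hx z hzS
  | zero => simpa using Submodule.zero_mem _
  | add a b _ _ ha hb => rw [mul_add]; exact Submodule.add_mem _ ha hb
  | smul f a _ ha =>
      rw [mul_smul_comm]
      exact Submodule.smul_mem _ f ha

/-- for a nonzero fractional ideal `I` of `D`,
`(I D[[X]])⁻¹ = I⁻¹[[X]] = (I[[X]])⁻¹`, where `J⁻¹ = (D[[X]] : J)`. -/
theorem stmt_0 (I : FractionalIdeal D⁰ K) (hI : I ≠ 0) :
    (((1 : Submodule (PowerSeries D) (LaurentSeries K)) / extPS D K I :
        Submodule (PowerSeries D) (LaurentSeries K)) : Set (LaurentSeries K)) =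
      psWithCoeff D K ((I⁻¹ : FractionalIdeal D⁰ K) : Submodule D K) ∧
    psWithCoeff D K ((I⁻¹ : FractionalIdeal D⁰ K) : Submodule D K) =
      (((1 : Submodule (PowerSeries D) (LaurentSeries K)) /
          Submodule.span (PowerSeries D) (psWithCoeff D K (I : Submodule D K)) :
        Submodule (PowerSeries D) (LaurentSeries K)) : Set (LaurentSeries K)) := by
  -- Auxiliary: constant series `C a` for `a ∈ I` lie in `psWithCoeff D K I`.
  have hCmem : ∀ a ∈ I, (HahnSeries.C a : LaurentSeries K) ∈
      psWithCoeff D K (I : Submodule D K) := by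
    intro a ha
    refine ⟨PowerSeries.C a, fun n => ?_, (HahnSeries.ofPowerSeries_C a).symm⟩
    rw [PowerSeries.coeff_C]
    split
    · exact FractionalIdeal.mem_coe.mpr ha
    · exact Submodule.zero_mem _
  -- First equality, direction ⊆ will need: every element of `1 / extPS D K I`
  -- is a power series with coefficients in `I⁻¹`.
  have key₁ : ∀ x : LaurentSeries K,
      x ∈ (1 : Submodule (PowerSeries D) (LaurentSeries K)) / extPS D K I →
      x ∈ psWithCoeff D K ((I⁻¹ : FractionalIdeal D⁰ K) : Submodule D K) := by
    intro x hx
    rw [Submodule.mem_div_iff_forall_mul_mem] at hx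
    have hxC : ∀ a ∈ I, x * HahnSeries.C a ∈
        (1 : Submodule (PowerSeries D) (LaurentSeries K)) := by
      intro a ha
      exact hx _ (Submodule.subset_span ⟨a, FractionalIdeal.mem_coe.mpr ha, rfl⟩)
    obtain ⟨d, hd0, hd⟩ := FractionalIdeal.exists_ne_zero_mem_isInteger hI
    set a : K := algebraMap D K d with ha_def
    have ha0 : a ≠ 0 := fun h => hd0 (IsFractionRing.to_map_eq_zero_iff.mp h)
    obtain ⟨g0, hg0, hxa⟩ := (aux_mem_one_iff D K _).mp (hxC a hd)
    set g : PowerSeries K := PowerSeries.C a⁻¹ * g0 with hg_def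
    have hxg : x = HahnSeries.ofPowerSeries ℤ K g := by
      rw [hg_def, map_mul, HahnSeries.ofPowerSeries_C, ← hxa, ← mul_assoc,
        mul_comm (HahnSeries.C a⁻¹) x, mul_assoc, ← map_mul,
        inv_mul_cancel₀ ha0, map_one, mul_one]
    refine ⟨g, fun n => ?_, hxg⟩
    rw [FractionalIdeal.mem_coe, FractionalIdeal.mem_inv_iff hI]
    intro b hb
    obtain ⟨g1, hg1, hxb⟩ := (aux_mem_one_iff D K _).mp (hxC b hb)
    have : HahnSeries.ofPowerSeries ℤ K (g * PowerSeries.C b) =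
        HahnSeries.ofPowerSeries ℤ K g1 := by
      rw [map_mul, HahnSeries.ofPowerSeries_C, ← hxg, ← hxb]
    have hgb : g * PowerSeries.C b = g1 := HahnSeries.ofPowerSeries_injective this
    have := hg1 n
    rw [← hgb, PowerSeries.coeff_mul_C] at this
    exact this
  -- Direction ⊇ of the first equality (also ⊆ of the second, with a bigger set).
  have key₂ : ∀ x ∈ psWithCoeff D K ((I⁻¹ : FractionalIdeal D⁰ K) : Submodule D K),
      x ∈ (1 : Submodule (PowerSeries D) (LaurentSeries K)) /
        Submodule.span (PowerSeries D) (psWithCoeff D K (I : Submodule D K)) := by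
    rintro x ⟨g, hg, rfl⟩
    rw [Submodule.mem_div_iff_forall_mul_mem]
    apply aux_span
    rintro z ⟨h, hh, rfl⟩
    exact aux_mul_mem D K I hI g h (fun n => FractionalIdeal.mem_coe.mp (hg n))
      (fun n => FractionalIdeal.mem_coe.mp (hh n))
  -- extPS D K I is contained in the span of psWithCoeff D K I.
  have hle : extPS D K I ≤
      Submodule.span (PowerSeries D) (psWithCoeff D K (I : Submodule D K)) := by
    apply Submodule.span_le.mpr
    rintro _ ⟨a, ha, rfl⟩
    exact Submodule.subset_span (hCmem a (FractionalIdeal.mem_coe.mp ha))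
  constructor
  · apply Set.eq_of_subset_of_subset
    · intro x hx
      exact key₁ x hx
    · intro x hx
      have h2 := key₂ x hx
      rw [Submodule.mem_div_iff_forall_mul_mem] at h2
      rw [SetLike.mem_coe, Submodule.mem_div_iff_forall_mul_mem]
      exact fun z hz => h2 z (hle hz)
  · apply Set.eq_of_subset_of_subset
    · intro x hx
      exact key₂ x hx
    · intro x hx
      rw [SetLike.mem_coe, Submodule.mem_div_iff_forall_mul_mem] at hx
      apply key₁
      rw [Submodule.mem_div_iff_forall_mul_mem]
      exact fun z hz => hx z (hle hz)
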